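/- Fix K > 0, t₁ ∈ [0,1), I₁ ∈ ℝ, C > 0, and Y^I > K such that Y^I > (C − I₁ + K(1−t₁))/(1−t₁) > K. Define g(ε) = Y^I + εK(K/Y^I)^{1/ε} and h(ε) = (1+ε)(C − I₁ + K(1−t₁))/(1−t₁) for ε > 0. Then there exists a unique ε > 0 with g(ε) = h(ε). -/

import Mathlib

open Real Set

-- chord slope of 1 - exp(-·) from 0 is strictly decreasing
lemma chord_lemma {x y : ℝ} (hx : 0 < x) (hxy : x < y) :
    x * (1 - Real.exp (-y)) < y * (1 - Real.exp (-x)) := by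
  have hy : 0 < y := hx.trans hxy
  have ha : (0:ℝ) < 1 - x / y := by
    rw [sub_pos, div_lt_one hy]; exact hxy
  have hb : (0:ℝ) < x / y := div_pos hx hy
  have hne : (0:ℝ) ≠ -y := by linarith
  have h := strictConvexOn_exp.2 (mem_univ (0:ℝ)) (mem_univ (-y)) hne ha hb (by ring)
  simp only [smul_eq_mul, mul_zero, zero_add, Real.exp_zero, mul_one] at h
  have hxy' : x / y * -y = -x := by field_simp
  rw [hxy'] at h
  -- h : exp (-x) < (1 - x/y) + x/y * exp (-y)
  have hmul := (mul_lt_mul_iff_right₀ hy).2 h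
  have hrw : y * (1 - x / y + x / y * Real.exp (-y)) = y - x + x * Real.exp (-y) := by
    field_simp
  rw [hrw] at hmul
  nlinarith [hmul]

-- increment bound for φ(ε) = ε exp(L/ε), L < 0
lemma phi_incr {L e1 e2 : ℝ} (hL : L < 0) (h1 : 0 < e1) (h12 : e1 < e2) :
    e2 * Real.exp (L * e2⁻¹) - e1 * Real.exp (L * e1⁻¹) < e2 - e1 := by
  have h2 : 0 < e2 := h1.trans h12
  set a : ℝ := -L with ha
  have ha0 : 0 < a := by simp [ha]; linarith
  set x : ℝ := a / e2 with hxdef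
  set y : ℝ := a / e1 with hydef
  have hx : 0 < x := div_pos ha0 h2
  have hy : 0 < y := div_pos ha0 h1
  have hxy : x < y := div_lt_div_of_pos_left ha0 h1 h12
  have hc := chord_lemma hx hxy
  have hex : L * e2⁻¹ = -x := by field_simp [hxdef, ha]; rw [hxdef, ha]; field_simp
  have hey : L * e1⁻¹ = -y := by field_simp [hydef, ha]; rw [hydef, ha]; field_simp
  rw [hex, hey]
  have he2x : e2 * x = a := by field_simp [hxdef]; rw [hxdef]; field_simp
  have he1y : e1 * y = a := by field_simp [hydef]; rw [hydef]; field_simp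
  -- multiply hc by e1*e2 > 0, use e2*x = e1*y = a, cancel a
  nlinarith [mul_pos h1 h2, mul_lt_mul_of_pos_left hc (mul_pos h1 h2),
    Real.exp_pos (-x), Real.exp_pos (-y)]

/-- The notch indifference equation
`Y^I + εK(K/Y^I)^{1/ε} = (1+ε)(C − I₁ + K(1−t₁))/(1−t₁)` has a unique solution
`ε > 0`. -/
theorem notch_unique_elasticity
    (K t1 I1 C YI : ℝ) (hK : 0 < K) (ht1a : 0 ≤ t1) (ht1b : t1 < 1) (hC : 0 < C)
    (hYK : K < YI)
    (hmid1 : K < (C - I1 + K * (1 - t1)) / (1 - t1))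
    (hmid2 : (C - I1 + K * (1 - t1)) / (1 - t1) < YI) :
    ∃! ε : ℝ, 0 < ε ∧
      YI + ε * K * (K / YI) ^ (1 / ε)
        = (1 + ε) * ((C - I1 + K * (1 - t1)) / (1 - t1)) := by
  set M : ℝ := (C - I1 + K * (1 - t1)) / (1 - t1) with hM
  have hYI : 0 < YI := hK.trans hYK
  have hr0 : 0 < K / YI := div_pos hK hYI
  have hr1 : K / YI < 1 := (div_lt_one hYI).2 hYK
  set L : ℝ := Real.log (K / YI) with hLdef
  have hL : L < 0 := Real.log_neg hr0 hr1
  have hrpow : ∀ ε : ℝ, (K / YI) ^ (1 / ε) = Real.exp (L * ε⁻¹) := by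
    intro ε
    rw [Real.rpow_def_of_pos hr0, one_div]
  -- F ε := (1+ε)M - (YI + ε K exp(L/ε)); strictly increasing on (0,∞)
  set F : ℝ → ℝ := fun ε => (1 + ε) * M - (YI + ε * K * Real.exp (L * ε⁻¹)) with hF
  have hmono : ∀ e1 e2 : ℝ, 0 < e1 → e1 < e2 → F e1 < F e2 := by
    intro e1 e2 h1 h12
    have key := phi_incr hL h1 h12
    have hKM : K < M := hmid1
    simp only [hF]
    nlinarith [mul_lt_mul_of_pos_left key hK]
  -- endpoints
  have hMY : M < YI := hmid2
  have hM0 : 0 < M := hK.trans hmid1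
  set e0 : ℝ := (YI - M) / (2 * M) with he0
  have he00 : 0 < e0 := div_pos (by linarith) (by linarith)
  set e1 : ℝ := e0 + (YI - M) / (M - K) + 1 with he1
  have he10 : 0 < (YI - M) / (M - K) := div_pos (by linarith) (by linarith)
  clear_value M L F e0 e1
  have he01 : e0 < e1 := by simp only [he1]; linarith
  have hF0 : F e0 < 0 := by
    have hexp : 0 < Real.exp (L * e0⁻¹) := Real.exp_pos _
    have h1 : e0 * (2 * M) = YI - M := by
      rw [he0]; exact div_mul_cancel₀ _ (by nlinarith : (2:ℝ) * M ≠ 0)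
    simp only [hF]
    nlinarith [mul_pos (mul_pos he00 hK) hexp]
  have hF1 : 0 < F e1 := by
    have hexp : Real.exp (L * e1⁻¹) < 1 := by
      rw [Real.exp_lt_one_iff]
      exact mul_neg_of_neg_of_pos hL (inv_pos.2 (he00.trans he01))
    have hMK : (0:ℝ) < M - K := by linarith
    have h2 : (YI - M) < e1 * (M - K) := by
      have hcanc : (YI - M) / (M - K) * (M - K) = YI - M :=
        div_mul_cancel₀ _ (ne_of_gt hMK)
      have hlt : (YI - M) / (M - K) < e1 := by simp only [he1]; linarith
      calc YI - M = (YI - M) / (M - K) * (M - K) := hcanc.symm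
        _ < e1 * (M - K) := by exact mul_lt_mul_of_pos_right hlt hMK
    have hK1 : e1 * K * Real.exp (L * e1⁻¹) < e1 * K :=
      mul_lt_of_lt_one_right (mul_pos (he00.trans he01) hK) hexp
    simp only [hF]
    have hre : (1 + e1) * M - (YI + e1 * K * Real.exp (L * e1⁻¹))
        = (M - YI + e1 * (M - K)) + (e1 * K - e1 * K * Real.exp (L * e1⁻¹)) := by ring
    rw [hre]
    have h3 : 0 < M - YI + e1 * (M - K) := by linarith
    linarith [hK1]
  -- continuity of F on [e0, e1]
  have hcont : ContinuousOn F (Icc e0 e1) := by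
    have hne : ∀ x ∈ Icc e0 e1, x ≠ 0 := fun x hx => ne_of_gt (lt_of_lt_of_le he00 hx.1)
    have hinv : ContinuousOn (fun x : ℝ => x⁻¹) (Icc e0 e1) := by
      apply ContinuousOn.inv₀ _ hne
      exact continuous_id.continuousOn
    have hexp : ContinuousOn (fun x : ℝ => Real.exp (L * x⁻¹)) (Icc e0 e1) :=
      Real.continuous_exp.comp_continuousOn (continuousOn_const.mul hinv)
    rw [hF]
    apply ContinuousOn.sub
    · exact (((continuous_const.add continuous_id).mul continuous_const)).continuousOn
    · exact continuousOn_const.add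
        (((continuous_id.mul continuous_const)).continuousOn.mul hexp)
  have h0mem : (0:ℝ) ∈ Icc (F e0) (F e1) := ⟨le_of_lt hF0, le_of_lt hF1⟩
  obtain ⟨c, hc, hFc⟩ := intermediate_value_Icc (le_of_lt he01) hcont h0mem
  have hc0 : 0 < c := lt_of_lt_of_le he00 hc.1
  refine ⟨c, ⟨hc0, ?_⟩, ?_⟩
  · have h := hFc
    simp only [hF] at h
    rw [hrpow c]
    linarith
  · rintro y ⟨hy0, hyeq⟩
    have hFy : F y = 0 := by
      have h := hyeq
      rw [hrpow y] at h
      simp only [hF]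
      linarith
    rcases lt_trichotomy y c with h | h | h
    · exfalso
      have := hmono y c hy0 h
      rw [hFy, hFc] at this; exact lt_irrefl 0 this
    · exact h
    · exfalso
      have := hmono c y hc0 h
      rw [hFy, hFc] at this; exact lt_irrefl 0 this
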